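/- Fix p ≥ 1, λ > 0, α ≥ 0, γ ∈ (0, 1], positive integers n and K, a vector η* ∈ ℝ^p, and for each t = 1, …, n a finite candidate set E_t with |E_t| ≥ K, a vector η̂_t ∈ ℝ^p, and a map ζ assigning to each nonempty ordered list A of distinct elements of E_t a vector ζ_A ∈ ℝ^p with ‖ζ_A‖_2 ≤ 1. Let A_t = (a_1^t, …, a_K^t) be the K-element ordered list chosen at step t, and define Φ_t = λ I_p + Σ_{i=1}^{t−1} Σ_{k=1}^{K} ζ_{A_i^k} ζ_{A_i^k}^T. For each t and each list A define w̄(A) = η*^T ζ_A, U_t(A) = clamp_{[0,1]}( η̂_t^T ζ_A + α √(ζ_A^T Φ_t^{−1} ζ_A) ), L_t(A) = clamp_{[0,1]}( η̂_t^T ζ_A − α √(ζ_A^T Φ_t^{−1} ζ_A) ), and f(A, g) = Σ_{k=1}^{|A|} g(A^k). Assume that for every t: (i) L_t(A) ≤ w̄(A) ≤ U_t(A) for every nonempty ordered list A of distinct elements of E_t, and (ii) f(A_t, U_t) ≥ γ · max over all K-element ordered lists B of distinct elements of E_t of f(B, U_t). Let A*_t maximize f(·, w̄) over K-element ordered lists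 of distinct elements of E_t. Then Σ_{t=1}^{n} [ f(A*_t, w̄) − f(A_t, w̄)/γ ] ≤ (2αK/γ) · √( n · p · log(1 + nK/(p·λ)) / ( λ · log(1 + 1/λ) ) ). -/

import Mathlib

open Matrix


open Matrix Finset

namespace CSRAux

set_option linter.unusedSectionVars false
set_option linter.unusedVariables false

variable {m : Type*} [Fintype m] [DecidableEq m]

lemma dot_self_nonneg (v : m → ℝ) : 0 ≤ v ⬝ᵥ v :=
  Finset.sum_nonneg fun i _ => mul_self_nonneg _

lemma quad_eq_sq (v x : m → ℝ) : x ⬝ᵥ (vecMulVec v v *ᵥ x) = (v ⬝ᵥ x) * (v ⬝ᵥ x) := by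
  simp only [dotProduct, mulVec, vecMulVec_apply]
  calc ∑ i, x i * ∑ j, v i * v j * x j
      = ∑ i, ∑ j, (v i * x i) * (v j * x j) := by
        refine Finset.sum_congr rfl fun i _ => ?_
        rw [Finset.mul_sum]
        exact Finset.sum_congr rfl fun j _ => by ring
    _ = (∑ i, v i * x i) * (∑ j, v j * x j) := by rw [← Finset.sum_mul_sum]

lemma posSemidef_vecMulVec (v : m → ℝ) : (vecMulVec v v).PosSemidef := by
  refine Matrix.PosSemidef.of_dotProduct_mulVec_nonneg ?_ (fun x => ?_)
  · ext i j
    simp [vecMulVec_apply, conjTranspose_apply, mul_comm]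
  · rw [star_trivial, quad_eq_sq]
    exact mul_self_nonneg _

lemma trace_vecMulVec (v : m → ℝ) : (vecMulVec v v).trace = v ⬝ᵥ v := by
  simp [Matrix.trace, Matrix.diag, vecMulVec_apply, dotProduct]

lemma det_add_vecMulVec {M : Matrix m m ℝ} (hM : M.PosDef) (v : m → ℝ) :
    (M + vecMulVec v v).det = M.det * (1 + v ⬝ᵥ M⁻¹ *ᵥ v) := by
  rw [vecMulVec_eq Unit]
  rw [Matrix.det_add_replicateCol_mul_replicateRow (ι := Unit) hM.det_pos.ne'.isUnit]
  rw [← Matrix.replicateRow_vecMul]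
  rw [Matrix.det_unique (A := 1 + Matrix.replicateRow Unit (Matrix.vecMul v M⁻¹) * Matrix.replicateCol Unit v)]
  simp [Matrix.dotProduct_mulVec]

lemma posSemidef_sum {ι' : Type*} (s : Finset ι') (f : ι' → Matrix m m ℝ)
    (hf : ∀ i ∈ s, (f i).PosSemidef) : (∑ i ∈ s, f i).PosSemidef := by
  classical
  induction s using Finset.induction_on with
  | empty => simpa using Matrix.PosSemidef.zero
  | insert _ _ hnot ih =>
    rw [Finset.sum_insert hnot]
    exact ((hf _ (Finset.mem_insert_self _ _)).add
      (ih fun i hi => hf i (Finset.mem_insert_of_mem hi)))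

lemma det_le_det_add_sum_vecMulVec {ι' : Type*} {M : Matrix m m ℝ} (hM : M.PosDef)
    (s : Finset ι') (u : ι' → m → ℝ) :
    M.det ≤ (M + ∑ i ∈ s, vecMulVec (u i) (u i)).det := by
  classical
  induction s using Finset.induction_on generalizing M with
  | empty => simp
  | @insert a s hnot ih =>
    rw [Finset.sum_insert hnot, ← add_assoc]
    have hM' : (M + vecMulVec (u a) (u a)).PosDef :=
      hM.add_posSemidef (posSemidef_vecMulVec (u a))
    refine le_trans ?_ (ih hM')
    rw [det_add_vecMulVec hM]
    have hx : 0 ≤ u a ⬝ᵥ M⁻¹ *ᵥ u a := by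
      have := hM.inv.posSemidef.dotProduct_mulVec_nonneg (u a)
      simpa using this
    nlinarith [hM.det_pos]

lemma det_add_sum_ge {ι' : Type*} {M : Matrix m m ℝ} (hM : M.PosDef)
    (s : Finset ι') (u : ι' → m → ℝ) {k : ι'} (hk : k ∈ s) :
    M.det * (1 + u k ⬝ᵥ M⁻¹ *ᵥ u k) ≤ (M + ∑ i ∈ s, vecMulVec (u i) (u i)).det := by
  classical
  have hsplit : ∑ i ∈ s, vecMulVec (u i) (u i)
      = vecMulVec (u k) (u k) + ∑ i ∈ s.erase k, vecMulVec (u i) (u i) :=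
    (Finset.add_sum_erase s _ hk).symm
  rw [hsplit, ← add_assoc, ← det_add_vecMulVec hM]
  exact det_le_det_add_sum_vecMulVec (hM.add_posSemidef (posSemidef_vecMulVec (u k))) _ u

lemma trace_eq_sum_eigenvalues {A : Matrix m m ℝ} (hA : A.IsHermitian) :
    A.trace = ∑ i, hA.eigenvalues i := by
  rw [hA.trace_eq_sum_eigenvalues]
  simp

lemma prod_le_div_card_pow [Nonempty m] (z : m → ℝ) (hz : ∀ i, 0 ≤ z i) :
    ∏ i, z i ≤ ((∑ i, z i) / (Fintype.card m)) ^ (Fintype.card m) := by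
  have hcard : (0:ℝ) < Fintype.card m := by
    exact_mod_cast Fintype.card_pos
  have hgm := Real.geom_mean_le_arith_mean_weighted Finset.univ
    (fun _ => (Fintype.card m : ℝ)⁻¹) z (fun _ _ => by positivity)
    (by rw [Finset.sum_const, Finset.card_univ, nsmul_eq_mul, mul_inv_cancel₀ hcard.ne'])
    (fun i _ => hz i)
  have hsum : ∑ i, ((Fintype.card m : ℝ)⁻¹) * z i = (∑ i, z i) / (Fintype.card m) := by
    rw [← Finset.mul_sum]; ring
  rw [hsum] at hgm
  have hL : (∏ i, z i ^ ((Fintype.card m : ℝ)⁻¹)) ^ (Fintype.card m : ℕ) = ∏ i, z i := by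
    rw [← Finset.prod_pow]
    refine Finset.prod_congr rfl fun i _ => ?_
    rw [← Real.rpow_natCast (z i ^ ((Fintype.card m : ℝ)⁻¹)) (Fintype.card m),
      ← Real.rpow_mul (hz i), inv_mul_cancel₀ hcard.ne', Real.rpow_one]
  calc ∏ i, z i = (∏ i, z i ^ ((Fintype.card m : ℝ)⁻¹)) ^ (Fintype.card m : ℕ) := hL.symm
    _ ≤ ((∑ i, z i) / (Fintype.card m)) ^ (Fintype.card m : ℕ) :=
        pow_le_pow_left₀ (Finset.prod_nonneg fun i _ => Real.rpow_nonneg (hz i) _) hgm _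

lemma det_le_trace_div_card_pow [Nonempty m] {A : Matrix m m ℝ} (hA : A.PosDef) :
    A.det ≤ (A.trace / (Fintype.card m)) ^ (Fintype.card m) := by
  rw [hA.isHermitian.det_eq_prod_eigenvalues, trace_eq_sum_eigenvalues hA.isHermitian]
  exact_mod_cast prod_le_div_card_pow _ (fun i => (hA.eigenvalues_pos i).le)

lemma clamp_sub_clamp_le {u v : ℝ} (h : v ≤ u) :
    max 0 (min 1 u) - max 0 (min 1 v) ≤ u - v := by
  have h1 : min 1 u ≤ min 1 v + (u - v) := by
    rcases le_total (1:ℝ) v with hv | hv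
    · rw [min_eq_left hv]
      have := min_le_left (1:ℝ) u
      linarith
    · rw [min_eq_right hv]
      have := min_le_right (1:ℝ) u
      linarith
  have h2 : (0:ℝ) ≤ max 0 (min 1 v) := le_max_left _ _
  have h3 : min 1 v ≤ max 0 (min 1 v) := le_max_right _ _
  have h4 : max 0 (min 1 u) ≤ max 0 (min 1 v) + (u - v) :=
    max_le (by linarith) (by linarith)
  linarith

lemma mul_log_le_mul_log {x c : ℝ} (hc : 0 < c) (hx0 : 0 ≤ x) (hxc : x ≤ c) :
    x * Real.log (1 + c) ≤ c * Real.log (1 + x) := by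
  have hcc : ConcaveOn ℝ (Set.Ioi 0) Real.log := strictConcaveOn_log_Ioi.concaveOn
  have hw1 : (0:ℝ) ≤ 1 - x / c := by
    rw [sub_nonneg]
    exact div_le_one_of_le₀ hxc hc.le
  have hw2 : (0:ℝ) ≤ x / c := by positivity
  have h := hcc.2 (Set.mem_Ioi.mpr one_pos)
    (Set.mem_Ioi.mpr (by linarith : (0:ℝ) < 1 + c)) hw1 hw2 (by ring)
  have hpt : (1 - x / c) • (1:ℝ) + (x / c) • (1 + c) = 1 + x := by
    rw [smul_eq_mul, smul_eq_mul]
    field_simp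
    ring
  rw [hpt, smul_eq_mul, smul_eq_mul, Real.log_one, mul_zero, zero_add] at h
  have := mul_le_mul_of_nonneg_left h hc.le
  calc x * Real.log (1 + c) = c * (x / c * Real.log (1 + c)) := by field_simp
    _ ≤ c * Real.log (1 + x) := this

end CSRAux

open CSRAux

/-- Cumulative regret bound.  For each step `t` of `n` steps, ordered lists
of distinct elements of the candidate set `Et t` are modelled as nonempty nodup `List`s
contained in `Et t`, with features `ζ t A ∈ ℝ^p` of Euclidean norm at most 1.  The chosen
list `A t` has length `K`, and `Φ t = λ • I + ∑_{i < t} ∑_{k=1}^K ζ_i(A_i^k) ζ_i(A_i^k)ᵀ`.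
With `w̄ t A = η*ᵀ ζ t A`, `U t A = clamp₀₁(η̂ₜᵀ ζ t A + α √(ζ t Aᵀ (Φ t)⁻¹ ζ t A))`,
`L t A = clamp₀₁(η̂ₜᵀ ζ t A - α √(ζ t Aᵀ (Φ t)⁻¹ ζ t A))` and
`f t A g = ∑_{k=1}^{|A|} g (A^k)`, assuming the good event `L t ≤ w̄ t ≤ U t` holds at
every step and `A t` is a `γ`-approximate maximizer of `f t (·) (U t)`, and `Astar t`
maximizes `f t (·) (w̄ t)` over `K`-permutations of `Et t`, we get
`∑_t [f t (Astar t) (w̄ t) - f t (A t) (w̄ t)/γ]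
  ≤ (2αK/γ) √(n p log(1 + nK/(pλ)) / (λ log(1 + 1/λ)))`. -/
theorem cumulative_scaled_regret_le
    {ι : Type*} (p : ℕ) (hp : 1 ≤ p)
    (lam : ℝ) (hlam : 0 < lam)
    (a : ℝ) (ha : 0 ≤ a)
    (γ : ℝ) (hγ0 : 0 < γ) (hγ1 : γ ≤ 1)
    (n K : ℕ) (hn : 0 < n) (hK : 0 < K)
    (ηstar : Fin p → ℝ)
    (Et : Fin n → Finset ι) (hEt : ∀ t, K ≤ (Et t).card)
    (ηhat : Fin n → (Fin p → ℝ))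
    (ζ : Fin n → List ι → (Fin p → ℝ))
    (hζnorm : ∀ (t : Fin n) (A : List ι), A ≠ [] → A.Nodup → (∀ x ∈ A, x ∈ Et t) →
      Real.sqrt (ζ t A ⬝ᵥ ζ t A) ≤ 1)
    (A : Fin n → List ι)
    (hALen : ∀ t, (A t).length = K) (hANodup : ∀ t, (A t).Nodup)
    (hAMem : ∀ t, ∀ x ∈ A t, x ∈ Et t)
    (Φ : Fin n → Matrix (Fin p) (Fin p) ℝ)
    (hΦ : ∀ t, Φ t = lam • (1 : Matrix (Fin p) (Fin p) ℝ)
      + ∑ i ∈ Finset.univ.filter (fun i => i < t), ∑ k ∈ Finset.Icc 1 K,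
          vecMulVec (ζ i ((A i).take k)) (ζ i ((A i).take k)))
    (wbar U L : Fin n → List ι → ℝ)
    (hw : ∀ t (B : List ι), wbar t B = ηstar ⬝ᵥ ζ t B)
    (hU : ∀ t (B : List ι), U t B
      = max 0 (min 1 (ηhat t ⬝ᵥ ζ t B + a * Real.sqrt (ζ t B ⬝ᵥ (Φ t)⁻¹ *ᵥ ζ t B))))
    (hL : ∀ t (B : List ι), L t B
      = max 0 (min 1 (ηhat t ⬝ᵥ ζ t B - a * Real.sqrt (ζ t B ⬝ᵥ (Φ t)⁻¹ *ᵥ ζ t B))))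
    (f : Fin n → List ι → (List ι → ℝ) → ℝ)
    (hf : ∀ t (B : List ι) (g : List ι → ℝ),
      f t B g = ∑ k ∈ Finset.Icc 1 B.length, g (B.take k))
    (good : ∀ t, ∀ B : List ι, B ≠ [] → B.Nodup → (∀ x ∈ B, x ∈ Et t) →
      L t B ≤ wbar t B ∧ wbar t B ≤ U t B)
    (hAApprox : ∀ t, ∀ B : List ι, B.length = K → B.Nodup → (∀ x ∈ B, x ∈ Et t) →
      γ * f t B (U t) ≤ f t (A t) (U t))
    (Astar : Fin n → List ι)
    (hAstarLen : ∀ t, (Astar t).length = K) (hAstarNodup : ∀ t, (Astar t).Nodup)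
    (hAstarMem : ∀ t, ∀ x ∈ Astar t, x ∈ Et t)
    (hAstarOpt : ∀ t, ∀ B : List ι, B.length = K → B.Nodup → (∀ x ∈ B, x ∈ Et t) →
      f t B (wbar t) ≤ f t (Astar t) (wbar t)) :
    ∑ t, (f t (Astar t) (wbar t) - f t (A t) (wbar t) / γ)
      ≤ (2 * a * K / γ) * Real.sqrt ((n * p * Real.log (1 + n * K / (p * lam)))
          / (lam * Real.log (1 + 1 / lam))) := by
  classical
  -- basic prefix facts
  have hpre : ∀ (B : List ι), B.length = K → ∀ k ∈ Finset.Icc 1 K,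
      (B.take k ≠ [] ∧ (B.take k).Sublist B) := by
    intro B hB k hk
    rw [Finset.mem_Icc] at hk
    constructor
    · intro hnil
      have := congrArg List.length hnil
      simp [List.length_take, hB] at this
      omega
    · exact List.take_sublist _ _
  -- notation
  set v : Fin n → ℕ → (Fin p → ℝ) := fun t k => ζ t ((A t).take k) with hv
  set W : Fin n → Matrix (Fin p) (Fin p) ℝ :=
    fun i => ∑ k ∈ Finset.Icc 1 K, vecMulVec (v i k) (v i k) with hW
  set G : ℕ → Matrix (Fin p) (Fin p) ℝ :=
    fun M => lam • (1 : Matrix (Fin p) (Fin p) ℝ)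
      + ∑ i ∈ Finset.univ.filter (fun i : Fin n => (i : ℕ) < M), W i with hG
  have hΦG : ∀ t : Fin n, Φ t = G (t : ℕ) := by
    intro t
    rw [hΦ t, hG]
    congr 1
  have hWpsd : ∀ i : Fin n, (W i).PosSemidef := by
    intro i
    rw [hW]
    exact posSemidef_sum _ _ fun k _ => posSemidef_vecMulVec _
  have hSpsd : ∀ M : ℕ,
      (∑ i ∈ Finset.univ.filter (fun i : Fin n => (i : ℕ) < M), W i).PosSemidef :=
    fun M => posSemidef_sum _ _ fun i _ => hWpsd i
  have hGpd : ∀ M : ℕ, (G M).PosDef := by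
    intro M
    refine Matrix.PosDef.add_posSemidef ?_ (hSpsd M)
    rw [Matrix.smul_one_eq_diagonal]
    exact Matrix.PosDef.diagonal fun _ => hlam
  set x : Fin n → ℕ → ℝ := fun t k => v t k ⬝ᵥ (G (t : ℕ))⁻¹ *ᵥ v t k with hx
  have hx0 : ∀ t k, 0 ≤ x t k := by
    intro t k
    have := (hGpd (t : ℕ)).inv.posSemidef.dotProduct_mulVec_nonneg (v t k)
    simpa using this
  -- norm bound on features of prefixes of A t
  have hvnorm : ∀ t, ∀ k ∈ Finset.Icc 1 K, v t k ⬝ᵥ v t k ≤ 1 := by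
    intro t k hk
    obtain ⟨hne, hsub⟩ := hpre (A t) (hALen t) k hk
    have hnd : ((A t).take k).Nodup := hsub.nodup (hANodup t)
    have hmem : ∀ y ∈ (A t).take k, y ∈ Et t := fun y hy => hAMem t y (hsub.mem hy)
    have h1 := hζnorm t _ hne hnd hmem
    have h2 := dot_self_nonneg (v t k)
    nlinarith [Real.sq_sqrt h2, Real.sqrt_nonneg (v t k ⬝ᵥ v t k)]
  -- x t k ≤ 1/lam
  have hx_le : ∀ t, ∀ k ∈ Finset.Icc 1 K, x t k ≤ 1 / lam := by
    intro t k hk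
    set u := v t k
    set y : Fin p → ℝ := (G (t : ℕ))⁻¹ *ᵥ u with hy
    have hGy : G (t : ℕ) *ᵥ y = u := by
      rw [hy, Matrix.mulVec_mulVec, Matrix.mul_nonsing_inv _ ((hGpd _).det_pos.ne'.isUnit),
        Matrix.one_mulVec]
    have hxy : x t k = y ⬝ᵥ u := by
      rw [hx]
      exact dotProduct_comm _ _
    -- lam * (y ⬝ y) ≤ x t k
    have hquad : lam * (y ⬝ᵥ y) ≤ x t k := by
      have hpsd : (0:ℝ) ≤ y ⬝ᵥ ((∑ i ∈ Finset.univ.filter (fun i : Fin n => (i : ℕ) < (t:ℕ)), W i) *ᵥ y) := by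
        have := (hSpsd (t : ℕ)).dotProduct_mulVec_nonneg y
        simpa using this
      have hexp : y ⬝ᵥ (G (t:ℕ) *ᵥ y)
          = lam * (y ⬝ᵥ y) + y ⬝ᵥ ((∑ i ∈ Finset.univ.filter (fun i : Fin n => (i : ℕ) < (t:ℕ)), W i) *ᵥ y) := by
        simp only [hG]
        rw [Matrix.add_mulVec, dotProduct_add, Matrix.smul_mulVec,
          Matrix.one_mulVec, dotProduct_smul, smul_eq_mul]
      have hGyq : y ⬝ᵥ (G (t:ℕ) *ᵥ y) = x t k := by
        rw [hGy, hxy, dotProduct_comm]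
      linarith [hexp, hGyq, hpsd]
    have hyy : 0 ≤ y ⬝ᵥ y := dot_self_nonneg y
    have hcs : (x t k) ^ 2 ≤ (u ⬝ᵥ u) * (y ⬝ᵥ y) := by
      have e : ∀ w : Fin p → ℝ, w ⬝ᵥ w = ∑ i, w i ^ 2 := fun w => by
        simp [dotProduct, pow_two]
      rw [hxy, dotProduct_comm, e u, e y]
      have := Finset.sum_mul_sq_le_sq_mul_sq Finset.univ u y
      simpa [dotProduct] using this
    have huu : u ⬝ᵥ u ≤ 1 := hvnorm t k hk
    have h1 : (x t k)^2 ≤ y ⬝ᵥ y := by nlinarith [dot_self_nonneg u]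
    rcases eq_or_lt_of_le (hx0 t k) with h | h
    · rw [← h]; positivity
    · have h2 : lam * (x t k) ^ 2 ≤ x t k :=
        (mul_le_mul_of_nonneg_left h1 hlam.le).trans hquad
      have h3 : lam * x t k ≤ 1 := by nlinarith
      rw [le_div_iff₀ hlam]
      linarith [mul_comm lam (x t k)]
  -- G successor
  have hGsucc : ∀ t : Fin n, G ((t : ℕ) + 1) = G (t : ℕ) + W t := by
    intro t
    have hfil : (Finset.univ.filter (fun i : Fin n => (i : ℕ) < (t : ℕ) + 1))
        = insert t (Finset.univ.filter (fun i : Fin n => (i : ℕ) < (t : ℕ))) := by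
      ext i
      simp [Nat.lt_succ_iff_lt_or_eq, Fin.ext_iff, or_comm]
      omega
    have hnot : t ∉ Finset.univ.filter (fun i : Fin n => (i : ℕ) < (t : ℕ)) := by simp
    simp only [hG]
    rw [hfil, Finset.sum_insert hnot]
    abel
  -- determinant step
  have hdet_step : ∀ t : Fin n, ∀ k ∈ Finset.Icc 1 K,
      (G (t : ℕ)).det * (1 + x t k) ≤ (G ((t : ℕ) + 1)).det := by
    intro t k hk
    rw [hGsucc t, hW]
    exact det_add_sum_ge (hGpd _) _ (v t) hk
  have hdetpos : ∀ M, (0:ℝ) < (G M).det := fun M => (hGpd M).det_pos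
  have hlog_step : ∀ t : Fin n, ∀ k ∈ Finset.Icc 1 K,
      Real.log (1 + x t k) ≤ Real.log ((G ((t : ℕ) + 1)).det) - Real.log ((G (t : ℕ)).det) := by
    intro t k hk
    have hx1 : (0:ℝ) < 1 + x t k := by linarith [hx0 t k]
    have hstep := hdet_step t k hk
    have hlogle : Real.log ((G (t : ℕ)).det * (1 + x t k)) ≤ Real.log ((G ((t : ℕ) + 1)).det) :=
      Real.log_le_log (mul_pos (hdetpos _) hx1) hstep
    rw [Real.log_mul (hdetpos _).ne' hx1.ne'] at hlogle
    linarith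
  -- telescoping
  set g : ℕ → ℝ := fun M => Real.log ((G M).det) with hg
  have htel : ∑ t : Fin n, (g ((t : ℕ) + 1) - g (t : ℕ)) = g n - g 0 := by
    rw [Fin.sum_univ_eq_sum_range (fun M => g (M + 1) - g M) n]
    exact Finset.sum_range_sub g n
  have hg0 : g 0 = (p : ℝ) * Real.log lam := by
    have hG0 : G 0 = lam • (1 : Matrix (Fin p) (Fin p) ℝ) := by
      rw [hG]
      simp
    simp only [hg]
    rw [hG0, Matrix.det_smul, Matrix.det_one, mul_one, Fintype.card_fin, Real.log_pow]
  -- trace bound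
  have htrace : (G n).trace ≤ lam * p + n * K := by
    rw [hG]
    simp only [Matrix.trace_add, Matrix.trace_smul, Matrix.trace_one, Matrix.trace_sum,
      smul_eq_mul, Fintype.card_fin]
    have hWtr : ∀ i ∈ Finset.univ.filter (fun i : Fin n => (i : ℕ) < n),
        (W i).trace ≤ (K : ℝ) := by
      intro i _
      rw [hW]
      simp only [Matrix.trace_sum]
      calc ∑ k ∈ Finset.Icc 1 K, (vecMulVec (v i k) (v i k)).trace
          = ∑ k ∈ Finset.Icc 1 K, v i k ⬝ᵥ v i k := by
            exact Finset.sum_congr rfl fun k _ => trace_vecMulVec _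
        _ ≤ ∑ k ∈ Finset.Icc 1 K, 1 := Finset.sum_le_sum fun k hk => hvnorm i k hk
        _ = (K : ℝ) := by simp [Nat.card_Icc]
    calc lam * p + ∑ i ∈ Finset.univ.filter (fun i : Fin n => (i : ℕ) < n), (W i).trace
        ≤ lam * p + (Finset.univ.filter (fun i : Fin n => (i : ℕ) < n)).card * (K:ℝ) := by
          have := Finset.sum_le_card_nsmul _ _ _ hWtr
          rw [nsmul_eq_mul] at this
          linarith
      _ ≤ lam * p + n * K := by
          have hcard : (Finset.univ.filter (fun i : Fin n => (i : ℕ) < n)).card ≤ n := by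
            simpa using (Finset.card_filter_le Finset.univ _).trans (by simp)
          have : ((Finset.univ.filter (fun i : Fin n => (i : ℕ) < n)).card : ℝ) ≤ (n:ℝ) := by
            exact_mod_cast hcard
          nlinarith [show (0:ℝ) ≤ (K:ℝ) from Nat.cast_nonneg K]
  -- log det bound at step n
  have hp0 : (0:ℝ) < (p:ℝ) := by exact_mod_cast hp
  have hnum : (0:ℝ) < lam * p + n * K :=
    add_pos_of_pos_of_nonneg (mul_pos hlam hp0) (by positivity)
  have hNE : Nonempty (Fin p) := ⟨⟨0, hp⟩⟩
  have hdetn : (G n).det ≤ ((lam * p + n * K) / p) ^ p := by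
    have h1 := det_le_trace_div_card_pow (hGpd n)
    rw [Fintype.card_fin] at h1
    have htrpos : (0:ℝ) < (G n).trace := by
      rw [trace_eq_sum_eigenvalues (hGpd n).isHermitian]
      exact Finset.sum_pos (fun i _ => (hGpd n).eigenvalues_pos i) Finset.univ_nonempty
    refine h1.trans (pow_le_pow_left₀ (le_of_lt (div_pos htrpos hp0)) ?_ p)
    gcongr
  set L1 := Real.log (1 + (n:ℝ) * K / (p * lam)) with hL1
  set L2 := Real.log (1 + 1 / lam) with hL2
  have hL2pos : 0 < L2 := by
    rw [hL2]
    apply Real.log_pos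
    have : (0:ℝ) < 1 / lam := by positivity
    linarith
  have hgn : g n - g 0 ≤ (p:ℝ) * L1 := by
    have hb : (0:ℝ) < (lam * p + n * K) / p := div_pos hnum hp0
    have hlogn : g n ≤ (p:ℝ) * Real.log ((lam * p + n * K) / p) := by
      simp only [hg]
      calc Real.log (G n).det ≤ Real.log (((lam * p + n * K) / p) ^ p) :=
            Real.log_le_log (hdetpos n) hdetn
        _ = (p:ℝ) * Real.log ((lam * p + n * K) / p) := by rw [Real.log_pow]
    rw [hg0]
    have harg : (lam * (p:ℝ) + n * K) / p / lam = 1 + (n:ℝ) * K / (p * lam) := by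
      field_simp
    have heq : (p:ℝ) * Real.log ((lam * p + n * K) / p) - (p:ℝ) * Real.log lam
        = (p:ℝ) * L1 := by
      rw [← mul_sub, ← Real.log_div hb.ne' hlam.ne', harg, hL1]
    linarith
  -- sum of logs bound
  have hD : ∑ t : Fin n, ∑ k ∈ Finset.Icc 1 K, Real.log (1 + x t k)
      ≤ (K:ℝ) * ((p:ℝ) * L1) := by
    have h1 : ∀ t : Fin n, ∑ k ∈ Finset.Icc 1 K, Real.log (1 + x t k)
        ≤ (K:ℝ) * (g ((t:ℕ) + 1) - g (t:ℕ)) := by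
      intro t
      have h2 := Finset.sum_le_card_nsmul (Finset.Icc 1 K)
        (fun k => Real.log (1 + x t k)) (g ((t:ℕ) + 1) - g (t:ℕ))
        (fun k hk => hlog_step t k hk)
      rw [Nat.card_Icc, nsmul_eq_mul] at h2
      simpa using h2
    calc ∑ t : Fin n, ∑ k ∈ Finset.Icc 1 K, Real.log (1 + x t k)
        ≤ ∑ t : Fin n, (K:ℝ) * (g ((t:ℕ) + 1) - g (t:ℕ)) := Finset.sum_le_sum fun t _ => h1 t
      _ = (K:ℝ) * (g n - g 0) := by rw [← Finset.mul_sum, htel]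
      _ ≤ (K:ℝ) * ((p:ℝ) * L1) :=
          mul_le_mul_of_nonneg_left hgn (Nat.cast_nonneg K)
  -- sum of x bound
  have hxlog : ∀ t : Fin n, ∀ k ∈ Finset.Icc 1 K,
      x t k ≤ (1 / (lam * L2)) * Real.log (1 + x t k) := by
    intro t k hk
    have h := mul_log_le_mul_log (c := 1 / lam) (by positivity) (hx0 t k) (hx_le t k hk)
    have h2 : lam * (x t k * L2) ≤ Real.log (1 + x t k) := by
      have h3 := mul_le_mul_of_nonneg_left h hlam.le
      calc lam * (x t k * L2) = lam * (x t k * Real.log (1 + 1 / lam)) := by rw [hL2]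
        _ ≤ lam * (1 / lam * Real.log (1 + x t k)) := h3
        _ = Real.log (1 + x t k) := by field_simp
    rw [div_mul_eq_mul_div, le_div_iff₀ (mul_pos hlam hL2pos)]
    nlinarith [h2]
  have hS : ∑ t : Fin n, ∑ k ∈ Finset.Icc 1 K, x t k
      ≤ (1 / (lam * L2)) * ((K:ℝ) * ((p:ℝ) * L1)) := by
    calc ∑ t : Fin n, ∑ k ∈ Finset.Icc 1 K, x t k
        ≤ ∑ t : Fin n, ∑ k ∈ Finset.Icc 1 K, (1 / (lam * L2)) * Real.log (1 + x t k) :=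
          Finset.sum_le_sum fun t _ => Finset.sum_le_sum fun k hk => hxlog t k hk
      _ = (1 / (lam * L2)) * ∑ t : Fin n, ∑ k ∈ Finset.Icc 1 K, Real.log (1 + x t k) := by
          simp_rw [← Finset.mul_sum]
      _ ≤ _ := mul_le_mul_of_nonneg_left hD (by positivity)
  -- Cauchy-Schwarz on the sum of square roots
  have hT : ∑ t : Fin n, ∑ k ∈ Finset.Icc 1 K, Real.sqrt (x t k)
      ≤ (K:ℝ) * Real.sqrt (((n:ℝ) * p * L1) / (lam * L2)) := by
    have hT0 : 0 ≤ ∑ t : Fin n, ∑ k ∈ Finset.Icc 1 K, Real.sqrt (x t k) :=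
      Finset.sum_nonneg fun t _ => Finset.sum_nonneg fun k _ => Real.sqrt_nonneg _
    have hTsq : (∑ t : Fin n, ∑ k ∈ Finset.Icc 1 K, Real.sqrt (x t k)) ^ 2
        ≤ ((n:ℝ) * K) * ∑ t : Fin n, ∑ k ∈ Finset.Icc 1 K, x t k := by
      have hprod : ∑ t : Fin n, ∑ k ∈ Finset.Icc 1 K, Real.sqrt (x t k)
          = ∑ q ∈ Finset.univ ×ˢ Finset.Icc 1 K, Real.sqrt (x q.1 q.2) := by
        rw [Finset.sum_product]
      have hprod2 : ∑ t : Fin n, ∑ k ∈ Finset.Icc 1 K, x t k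
          = ∑ q ∈ Finset.univ ×ˢ Finset.Icc 1 K, x q.1 q.2 := by
        rw [Finset.sum_product]
      have hsq := sq_sum_le_card_mul_sum_sq
        (s := Finset.univ ×ˢ Finset.Icc 1 K) (f := fun q => Real.sqrt (x q.1 q.2))
      have hcard : ((Finset.univ ×ˢ Finset.Icc 1 K : Finset (Fin n × ℕ)).card : ℝ)
          = (n:ℝ) * K := by
        rw [Finset.card_product, Finset.card_univ, Fintype.card_fin, Nat.card_Icc]
        simp
      have hsq2 : ∑ q ∈ Finset.univ ×ˢ Finset.Icc 1 K, Real.sqrt (x q.1 q.2) ^ 2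
          = ∑ q ∈ Finset.univ ×ˢ Finset.Icc 1 K, x q.1 q.2 :=
        Finset.sum_congr rfl fun q _ => Real.sq_sqrt (hx0 q.1 q.2)
      rw [hprod, hprod2]
      calc (∑ q ∈ Finset.univ ×ˢ Finset.Icc 1 K, Real.sqrt (x q.1 q.2)) ^ 2
          ≤ ((Finset.univ ×ˢ Finset.Icc 1 K : Finset (Fin n × ℕ)).card : ℝ)
            * ∑ q ∈ Finset.univ ×ˢ Finset.Icc 1 K, Real.sqrt (x q.1 q.2) ^ 2 := hsq
        _ = ((n:ℝ) * K) * ∑ q ∈ Finset.univ ×ˢ Finset.Icc 1 K, x q.1 q.2 := by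
            rw [hcard, hsq2]
    have h2 : (∑ t : Fin n, ∑ k ∈ Finset.Icc 1 K, Real.sqrt (x t k)) ^ 2
        ≤ (K:ℝ) ^ 2 * (((n:ℝ) * p * L1) / (lam * L2)) := by
      have h3 : ((n:ℝ) * K) * ∑ t : Fin n, ∑ k ∈ Finset.Icc 1 K, x t k
          ≤ ((n:ℝ) * K) * ((1 / (lam * L2)) * ((K:ℝ) * ((p:ℝ) * L1))) :=
        mul_le_mul_of_nonneg_left hS (by positivity)
      have h4 : ((n:ℝ) * K) * ((1 / (lam * L2)) * ((K:ℝ) * ((p:ℝ) * L1)))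
          = (K:ℝ) ^ 2 * (((n:ℝ) * p * L1) / (lam * L2)) := by
        ring
      linarith [hTsq]
    calc ∑ t : Fin n, ∑ k ∈ Finset.Icc 1 K, Real.sqrt (x t k)
        = Real.sqrt ((∑ t : Fin n, ∑ k ∈ Finset.Icc 1 K, Real.sqrt (x t k)) ^ 2) :=
          (Real.sqrt_sq hT0).symm
      _ ≤ Real.sqrt ((K:ℝ) ^ 2 * (((n:ℝ) * p * L1) / (lam * L2))) := Real.sqrt_le_sqrt h2
      _ = (K:ℝ) * Real.sqrt (((n:ℝ) * p * L1) / (lam * L2)) := by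
          rw [Real.sqrt_mul (sq_nonneg _), Real.sqrt_sq (Nat.cast_nonneg K)]
  -- per-step regret bound
  have hstepA : ∀ t : Fin n,
      f t (Astar t) (wbar t) - f t (A t) (wbar t) / γ
        ≤ (2 * a / γ) * ∑ k ∈ Finset.Icc 1 K, Real.sqrt (x t k) := by
    intro t
    have hvalid : ∀ (B : List ι), B.length = K → B.Nodup → (∀ y ∈ B, y ∈ Et t) →
        ∀ k ∈ Finset.Icc 1 K,
          (B.take k ≠ [] ∧ (B.take k).Nodup ∧ ∀ y ∈ B.take k, y ∈ Et t) := by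
      intro B hlen hnd hmem k hk
      obtain ⟨hne, hsub⟩ := hpre B hlen k hk
      exact ⟨hne, hsub.nodup hnd, fun y hy => hmem y (hsub.mem hy)⟩
    have h1 : f t (Astar t) (wbar t) ≤ f t (Astar t) (U t) := by
      rw [hf, hf, hAstarLen t]
      refine Finset.sum_le_sum fun k hk => ?_
      obtain ⟨hne, hnd, hmem⟩ := hvalid _ (hAstarLen t) (hAstarNodup t) (hAstarMem t) k hk
      exact (good t _ hne hnd hmem).2
    have h2 : γ * f t (Astar t) (U t) ≤ f t (A t) (U t) :=
      hAApprox t _ (hAstarLen t) (hAstarNodup t) (hAstarMem t)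
    have h3 : f t (A t) (L t) ≤ f t (A t) (wbar t) := by
      rw [hf, hf, hALen t]
      refine Finset.sum_le_sum fun k hk => ?_
      obtain ⟨hne, hnd, hmem⟩ := hvalid _ (hALen t) (hANodup t) (hAMem t) k hk
      exact (good t _ hne hnd hmem).1
    have h4 : f t (A t) (U t) - f t (A t) (L t)
        ≤ 2 * a * ∑ k ∈ Finset.Icc 1 K, Real.sqrt (x t k) := by
      rw [hf, hf, hALen t, ← Finset.sum_sub_distrib, Finset.mul_sum]
      refine Finset.sum_le_sum fun k hk => ?_
      have hxk : x t k = ζ t ((A t).take k) ⬝ᵥ (G (t:ℕ))⁻¹ *ᵥ ζ t ((A t).take k) := rfl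
      rw [hU, hL, hΦG t, hxk]
      have hs : 0 ≤ a * Real.sqrt (ζ t ((A t).take k) ⬝ᵥ (G (t:ℕ))⁻¹ *ᵥ ζ t ((A t).take k)) :=
        mul_nonneg ha (Real.sqrt_nonneg _)
      have hcl := clamp_sub_clamp_le
        (u := ηhat t ⬝ᵥ ζ t ((A t).take k)
          + a * Real.sqrt (ζ t ((A t).take k) ⬝ᵥ (G (t:ℕ))⁻¹ *ᵥ ζ t ((A t).take k)))
        (v := ηhat t ⬝ᵥ ζ t ((A t).take k)
          - a * Real.sqrt (ζ t ((A t).take k) ⬝ᵥ (G (t:ℕ))⁻¹ *ᵥ ζ t ((A t).take k)))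
        (by linarith)
      linarith [hcl]
    have key : γ * f t (Astar t) (wbar t) - f t (A t) (wbar t)
        ≤ 2 * a * ∑ k ∈ Finset.Icc 1 K, Real.sqrt (x t k) := by
      have h5 : γ * f t (Astar t) (wbar t) ≤ γ * f t (Astar t) (U t) :=
        mul_le_mul_of_nonneg_left h1 hγ0.le
      linarith
    calc f t (Astar t) (wbar t) - f t (A t) (wbar t) / γ
        = (γ * f t (Astar t) (wbar t) - f t (A t) (wbar t)) / γ := by
          rw [sub_div, mul_div_cancel_left₀ _ hγ0.ne']
      _ ≤ (2 * a * ∑ k ∈ Finset.Icc 1 K, Real.sqrt (x t k)) / γ := by gcongr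
      _ = (2 * a / γ) * ∑ k ∈ Finset.Icc 1 K, Real.sqrt (x t k) := by ring
  -- final assembly
  calc ∑ t, (f t (Astar t) (wbar t) - f t (A t) (wbar t) / γ)
      ≤ ∑ t : Fin n, (2 * a / γ) * ∑ k ∈ Finset.Icc 1 K, Real.sqrt (x t k) :=
        Finset.sum_le_sum fun t _ => hstepA t
    _ = (2 * a / γ) * ∑ t : Fin n, ∑ k ∈ Finset.Icc 1 K, Real.sqrt (x t k) := by
        rw [← Finset.mul_sum]
    _ ≤ (2 * a / γ) * ((K:ℝ) * Real.sqrt (((n:ℝ) * p * L1) / (lam * L2))) :=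
        mul_le_mul_of_nonneg_left hT (div_nonneg (by linarith) hγ0.le)
    _ = (2 * a * K / γ) * Real.sqrt ((n:ℝ) * p * L1 / (lam * L2)) := by ring
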